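/- Let (N,M) be a marked proper free-choice net having a home cluster C. For every place p that is marked in some reachable marking, there exists a C-rooted disentangled path starting in p. -/

import Mathlib

open scoped Classical

/-- A Petri net over places `P` and transitions `T`, given by preset and postset
of each transition (this encodes the flow relation `F`). -/
structure PetriNet (P T : Type) where
  pre : T → Finset P
  post : T → Finset P

namespace PetriNet

variable {P T : Type} [DecidableEq P] (N : PetriNet P T)

/-- A transition is enabled if each input place holds at least one token. -/
def enabled (M : P → ℕ) (t : T) : Prop := ∀ p ∈ N.pre t, 1 ≤ M p

/-- Firing a transition. -/
def fire (M : P → ℕ) (t : T) : P → ℕ :=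
  fun p => M p - (if p ∈ N.pre t then 1 else 0) + (if p ∈ N.post t then 1 else 0)

/-- `Fires M σ M'` : the firing sequence σ is enabled in M and leads to M'. -/
inductive Fires : (P → ℕ) → List T → (P → ℕ) → Prop
  | nil (M : P → ℕ) : Fires M [] M
  | cons {M : P → ℕ} {t : T} {σ : List T} {M'' : P → ℕ} :
      N.enabled M t → Fires (N.fire M t) σ M'' → Fires M (t :: σ) M''

/-- Reachability of markings. -/
def Reach (M M' : P → ℕ) : Prop := ∃ σ : List T, N.Fires M σ M'

/-- The set of transitions enabled in a marking. -/
def en (M : P → ℕ) : Set T := {t | N.enabled M t}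

/-- Lucency: reachable markings are determined by their sets of enabled transitions. -/
def Lucent (M : P → ℕ) : Prop :=
  ∀ M1 M2 : P → ℕ, N.Reach M M1 → N.Reach M M2 → N.en M1 = N.en M2 → M1 = M2

/-- Free-choice: presets of any two transitions are equal or disjoint. -/
def FreeChoice : Prop :=
  ∀ t1 t2 : T, N.pre t1 = N.pre t2 ∨ N.pre t1 ∩ N.pre t2 = ∅

/-- Proper: every transition has a nonempty preset and postset. -/
def Proper : Prop := ∀ t : T, (N.pre t).Nonempty ∧ (N.post t).Nonempty

/-- The directed edge (flow) relation on nodes `P ⊕ T`. -/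
def edge : (P ⊕ T) → (P ⊕ T) → Prop
  | Sum.inl p, Sum.inr t => p ∈ N.pre t
  | Sum.inr t, Sum.inl p => p ∈ N.post t
  | _, _ => False

/-- `InCluster x y` : y is in the cluster of x (smallest set containing x closed
under adding output transitions of places and input places of transitions). -/
inductive InCluster : (P ⊕ T) → (P ⊕ T) → Prop
  | refl (x : P ⊕ T) : InCluster x x
  | toTrans {x : P ⊕ T} {p : P} {t : T} :
      InCluster x (Sum.inl p) → p ∈ N.pre t → InCluster x (Sum.inr t)
  | toPlace {x : P ⊕ T} {t : T} {p : P} :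
      InCluster x (Sum.inr t) → p ∈ N.pre t → InCluster x (Sum.inl p)

/-- The cluster of a node. -/
def cluster (x : P ⊕ T) : Set (P ⊕ T) := {y | N.InCluster x y}

/-- A set of nodes is a cluster if it is the cluster of some node. -/
def IsCluster (C : Set (P ⊕ T)) : Prop := ∃ x : P ⊕ T, C = N.cluster x

/-- `Mrk(C)` : one token on each place of `C`, no tokens elsewhere. -/
noncomputable def clusterMrk (C : Set (P ⊕ T)) : P → ℕ :=
  fun p => if Sum.inl p ∈ C then 1 else 0

/-- A home marking is reachable from every reachable marking. -/
def IsHomeMarking (M MH : P → ℕ) : Prop := ∀ M', N.Reach M M' → N.Reach M' MH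

/-- A home cluster is a cluster whose marking `Mrk(C)` is a home marking. -/
def HomeCluster (M : P → ℕ) (C : Set (P ⊕ T)) : Prop :=
  N.IsCluster C ∧ N.IsHomeMarking M (clusterMrk C)

/-- A conflict-pair for `(N,M)`. -/
def ConflictPair (M M1 M2 : P → ℕ) : Prop :=
  N.Reach M M1 ∧ N.Reach M M2 ∧
  (∃ t, N.enabled M1 t) ∧ (∃ t, N.enabled M2 t) ∧
  (∀ t, ¬ (N.enabled M1 t ∧ N.enabled M2 t)) ∧
  (∀ t, N.enabled M1 t → ∃ p ∈ N.pre t, 1 ≤ M2 p) ∧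
  (∀ t, N.enabled M2 t → ∃ p ∈ N.pre t, 1 ≤ M1 p)

/-- A disentangled path `⟨p_1,t_1,p_2,…,t_{n-1},p_n⟩`, given by its lists of
places and transitions: consecutive nodes are connected by the flow relation and
all places lie in pairwise distinct clusters. -/
def IsDisPath (ps : List P) (ts : List T) : Prop :=
  ps.length = ts.length + 1 ∧
  (∀ (i : ℕ) (t : T) (p p' : P), ts[i]? = some t → ps[i]? = some p →
      ps[i + 1]? = some p' → p ∈ N.pre t ∧ p' ∈ N.post t) ∧
  ps.Pairwise (fun a b => N.cluster (Sum.inl a) ≠ N.cluster (Sum.inl b))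

/-- `Exp M σ σ'` : σ' is obtained from σ by repeatedly expediting transitions
(moving the transition at position j to an earlier position i, provided the
prefix of length i followed by that transition is enabled from M and no
transition at positions i..j-1 shares its cluster). -/
inductive Exp (M : P → ℕ) (σ : List T) : List T → Prop
  | refl : Exp M σ σ
  | step {σ' : List T} {i j : ℕ} (h : Exp M σ σ') (hij : i < j) (hj : j < σ'.length)
      (ha : ∃ Mx, N.Fires M (σ'.take i ++ [σ'.get ⟨j, hj⟩]) Mx)
      (hb : ∀ (k : ℕ) (hk : k < σ'.length), i ≤ k → k < j →
        N.cluster (Sum.inr (σ'.get ⟨k, hk⟩)) ≠ N.cluster (Sum.inr (σ'.get ⟨j, hj⟩))) :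
      Exp M σ ((σ'.eraseIdx j).insertIdx i (σ'.get ⟨j, hj⟩))

/-- Liveness: from every reachable marking, every transition can be enabled again. -/
def Live (M : P → ℕ) : Prop :=
  ∀ M', N.Reach M M' → ∀ t : T, ∃ M'', N.Reach M' M'' ∧ N.enabled M'' t

/-- Boundedness. -/
def Bounded (M : P → ℕ) : Prop :=
  ∃ k, ∀ M', N.Reach M M' → ∀ p, M' p ≤ k

/-- Safety (1-boundedness). -/
def Safe (M : P → ℕ) : Prop := ∀ M', N.Reach M M' → ∀ p, M' p ≤ 1

end PetriNet

namespace PetriNet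

variable {P T : Type} [DecidableEq P] {N : PetriNet P T}

/-- Transitivity of cluster membership. -/
lemma inCluster_trans {x y z : P ⊕ T} (h2 : N.InCluster y z) :
    N.InCluster x y → N.InCluster x z := by
  induction h2 with
  | refl => exact id
  | toTrans _ hpt ih => exact fun h => .toTrans (ih h) hpt
  | toPlace _ hpt ih => exact fun h => .toPlace (ih h) hpt

/-- If `a` belongs to a cluster `C` and `b` has the same cluster as `a`, then `b ∈ C`. -/
lemma mem_of_cluster_eq {a b : P} {C : Set (P ⊕ T)} (hC : N.IsCluster C)
    (ha : Sum.inl a ∈ C) (hab : N.cluster (Sum.inl a) = N.cluster (Sum.inl b)) :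
    Sum.inl b ∈ C := by
  obtain ⟨x, rfl⟩ := hC
  have hb : N.InCluster (Sum.inl a) (Sum.inl b) := by
    have h0 : Sum.inl b ∈ N.cluster (Sum.inl b) := InCluster.refl _
    rw [← hab] at h0; exact h0
  exact inCluster_trans hb ha

/-- In a free-choice net, every place in the cluster of `p'` lies in the preset of
any transition consuming `p'`. -/
lemma pre_of_inCluster (hfc : N.FreeChoice) {t : T} {x y : P ⊕ T}
    (h : N.InCluster x y) :
    ∀ p', x = Sum.inl p' → p' ∈ N.pre t →
      (∀ q, y = Sum.inl q → q ∈ N.pre t) ∧ (∀ s, y = Sum.inr s → N.pre s = N.pre t) := by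
  induction h with
  | refl =>
      rintro p' rfl ht
      exact ⟨fun q hq => (by cases hq; exact ht), fun s hs => (by cases hs)⟩
  | @toTrans q s h hq ih =>
      rintro p' hx ht
      refine ⟨fun _ h' => (by cases h'), fun s' hs' => ?_⟩
      cases hs'
      have hq' : q ∈ N.pre t := (ih p' hx ht).1 _ rfl
      rcases hfc s t with h2 | h2
      · exact h2
      · exact absurd (Finset.mem_inter.mpr ⟨hq, hq'⟩) (by simp [h2])
  | @toPlace s q h hq ih =>
      rintro p' hx ht
      refine ⟨fun q' hq' => ?_, fun _ h' => (by cases h')⟩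
      cases hq'
      have h2 : N.pre s = N.pre t := (ih p' hx ht).2 _ rfl
      rwa [h2] at hq

/-- A path in the net (not necessarily disentangled). -/
def Raw (N : PetriNet P T) (ps : List P) (ts : List T) : Prop :=
  ps.length = ts.length + 1 ∧
  (∀ (i : ℕ) (t : T) (p p' : P), ts[i]? = some t → ps[i]? = some p →
      ps[i + 1]? = some p' → p ∈ N.pre t ∧ p' ∈ N.post t)

/-- From a marked place, following a firing sequence leading to `Mrk C`, one
obtains a raw path ending in `C`. -/
lemma exists_raw (hp : N.Proper) (C : Set (P ⊕ T)) :
    ∀ (σ : List T) (M1 : P → ℕ), N.Fires M1 σ (clusterMrk C) → ∀ q : P, 1 ≤ M1 q →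
      ∃ ps ts, Raw N ps ts ∧ ps.head? = some q ∧
        ∃ r, ps.getLast? = some r ∧ Sum.inl r ∈ C := by
  intro σ
  induction σ with
  | nil =>
      intro M1 h q hq
      cases h
      have hqC : Sum.inl q ∈ C := by
        by_contra hqc
        simp [clusterMrk, hqc] at hq
      exact ⟨[q], [], ⟨rfl, by intro i t a b ht _ _; simp at ht⟩, rfl, q, rfl, hqC⟩
  | cons t σ' ih =>
      intro M1 h q hq
      cases h with
      | cons hen hf =>
        by_cases hqt : q ∈ N.pre t
        · obtain ⟨p', hp'⟩ := (hp t).2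
          have h1 : 1 ≤ N.fire M1 t p' := by
            simp only [fire, hp', if_true]
            split <;> omega
          obtain ⟨ps, ts, hraw, hhead, r, hlast, hrC⟩ := ih _ hf p' h1
          cases ps with
          | nil => simp at hhead
          | cons q' ps₀ =>
            have hq' : q' = p' := by simpa using hhead
            subst hq'
            refine ⟨q :: q' :: ps₀, t :: ts, ⟨by simpa using hraw.1, ?_⟩, rfl, r, ?_, hrC⟩
            · intro i t' a a' ht' ha ha'
              cases i with
              | zero =>
                  simp only [List.getElem?_cons_zero, Option.some.injEq] at ht' ha ha'
                  subst ht'; subst ha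
                  have ha'' : q' = a' := by simpa using ha'
                  exact ⟨hqt, by rw [← ha'']; exact hp'⟩
              | succ i =>
                  rw [List.getElem?_cons_succ] at ht'
                  rw [List.getElem?_cons_succ] at ha
                  rw [List.getElem?_cons_succ] at ha'
                  exact hraw.2 i t' a a' ht' ha ha'
            · simpa [List.getLast?_cons_cons] using hlast
        · have h1 : 1 ≤ N.fire M1 t q := by
            simp only [fire, hqt, if_false]
            split <;> omega
          exact ih _ hf q h1

/-- Pruning a raw path ending in a cluster `C` to a disentangled path. -/
lemma prune (hfc : N.FreeChoice) {C : Set (P ⊕ T)} (hC : N.IsCluster C) :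
    ∀ (n : ℕ) (ps : List P) (ts : List T), ps.length ≤ n → Raw N ps ts →
      (∃ r, ps.getLast? = some r ∧ Sum.inl r ∈ C) →
      ∃ ps' ts', N.IsDisPath ps' ts' ∧ ps'.head? = ps.head? ∧
        (∃ r, ps'.getLast? = some r ∧ Sum.inl r ∈ C) ∧ ps'.Sublist ps := by
  intro n
  induction n with
  | zero =>
      intro ps ts hlen hraw _
      have := hraw.1
      omega
  | succ n ih =>
    intro ps ts hlen hraw hlast
    obtain ⟨r, hlastr, hrC⟩ := hlast
    cases ps with
    | nil => simp at hlastr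
    | cons p1 ps₀ =>
      set L : List P := p1 :: ps₀ with hL
      set Q : ℕ → Prop := fun j => j < L.length ∧
        N.cluster (Sum.inl (L.getD j p1)) = N.cluster (Sum.inl p1) with hQdef
      have hQ0 : Q 0 := ⟨by simp [hL], by simp [hL]⟩
      set j := Nat.findGreatest Q (L.length - 1) with hjdef
      have hQj : Q j := Nat.findGreatest_spec (Nat.zero_le _) hQ0
      have hjle : j ≤ L.length - 1 := Nat.findGreatest_le _
      have hjlt : j < L.length := hQj.1
      have hgetDj : L.getD j p1 = L[j] := List.getD_eq_getElem L p1 hjlt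
      by_cases hjtop : j = L.length - 1
      · -- the last place has the same cluster as p1, so p1 ∈ C already
        have hlast2 : L.getLast? = L[j]? := by
          rw [hjtop]
          exact List.getLast?_eq_getElem? (l := L)
        have hsome : some r = some L[j] := by
          rw [← hlastr, hlast2, List.getElem?_eq_getElem hjlt]
        have hr : r = L[j] := by simpa using hsome
        have hclus : N.cluster (Sum.inl r) = N.cluster (Sum.inl p1) := by
          rw [hr, ← hgetDj]; exact hQj.2
        have hp1C : Sum.inl p1 ∈ C := mem_of_cluster_eq hC hrC hclus
        refine ⟨[p1], [], ⟨rfl, by intro i t a b ht _ _; simp at ht, by simp⟩,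
          by simp [hL], ⟨p1, rfl, hp1C⟩, ?_⟩
        exact List.cons_sublist_cons.mpr (List.nil_sublist _)
      · -- j is not the last index
        have hLlen : L.length = ts.length + 1 := hraw.1
        have hjts : j < ts.length := by omega
        have hj1 : j + 1 < L.length := by omega
        set qs := L.drop (j + 1) with hqs
        set us := ts.drop (j + 1) with hus
        have hqslen : qs.length = L.length - (j + 1) := by simp [hqs]
        have huslen : us.length = ts.length - (j + 1) := by simp [hus]
        have hrawqs : Raw N qs us := by
          constructor
          · omega
          · intro i t a a' ht ha ha'
            rw [hus, List.getElem?_drop] at ht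
            rw [hqs, List.getElem?_drop] at ha ha'
            have he : j + 1 + (i + 1) = (j + 1 + i) + 1 := by omega
            rw [he] at ha'
            exact hraw.2 (j + 1 + i) t a a' ht ha ha'
        have hlastqs : qs.getLast? = some r := by
          rw [List.getLast?_eq_getElem?, hqs, List.getElem?_drop]
          rw [List.getLast?_eq_getElem?] at hlastr
          rw [← hlastr]
          congr 1
          simp only [List.length_drop]
          omega
        obtain ⟨ps', ts', hdis, hhead', hlast', hsub⟩ :=
          ih qs us (by omega) hrawqs ⟨r, hlastqs, hrC⟩
        have htj : ts[j]? = some ts[j] := List.getElem?_eq_getElem hjts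
        have hLj : L[j]? = some L[j] := List.getElem?_eq_getElem hjlt
        have hLj1 : L[j + 1]? = some L[j + 1] := List.getElem?_eq_getElem hj1
        obtain ⟨hpre, hpost⟩ := hraw.2 j ts[j] L[j] L[j + 1] htj hLj hLj1
        have hclusj : N.cluster (Sum.inl L[j]) = N.cluster (Sum.inl p1) := by
          rw [← hgetDj]; exact hQj.2
        have hincl : N.InCluster (Sum.inl L[j]) (Sum.inl p1) := by
          have h0 : Sum.inl p1 ∈ N.cluster (Sum.inl p1) := InCluster.refl _
          rw [← hclusj] at h0; exact h0
        have hp1pre : p1 ∈ N.pre ts[j] :=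
          (pre_of_inCluster hfc hincl L[j] rfl hpre).1 p1 rfl
        have hheadqs : qs.head? = some L[j + 1] := by
          rw [List.head?_eq_getElem?, hqs, List.getElem?_drop]
          simpa using hLj1
        rw [hheadqs] at hhead'
        cases ps' with
        | nil => simp at hhead'
        | cons q ps'' =>
          have hqval : q = L[j + 1] := by simpa using hhead'
          refine ⟨p1 :: q :: ps'', ts[j] :: ts', ⟨?_, ?_, ?_⟩, by simp [hL], ?_, ?_⟩
          · have h := hdis.1
            simp only [List.length_cons] at h ⊢
            omega
          · intro i t' a a' ht' ha ha'
            cases i with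
            | zero =>
                simp only [List.getElem?_cons_zero, Option.some.injEq] at ht' ha ha'
                subst ht'; subst ha
                have ha'' : q = a' := by simpa using ha'
                refine ⟨hp1pre, ?_⟩
                rw [← ha'', hqval]
                exact hpost
            | succ i =>
                rw [List.getElem?_cons_succ] at ht'
                rw [List.getElem?_cons_succ] at ha
                rw [List.getElem?_cons_succ] at ha'
                exact hdis.2.1 i t' a a' ht' ha ha'
          · refine List.pairwise_cons.mpr ⟨fun b hb => ?_, hdis.2.2⟩
            have hbqs : b ∈ qs := hsub.subset hb
            obtain ⟨k, hk, hbk⟩ := List.mem_iff_getElem.mp hbqs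
            have hkL : j + 1 + k < L.length := by
              have hk' := hk
              rw [hqslen] at hk'; omega
            have hbk? : qs[k]? = some b := by
              rw [List.getElem?_eq_getElem hk]; exact congrArg some hbk
            rw [hqs, List.getElem?_drop] at hbk?
            have hbL : L[j + 1 + k] = b := by
              have hsome := List.getElem?_eq_getElem hkL
              rw [hsome] at hbk?
              exact Option.some.inj hbk?
            have hnQ : ¬ Q (j + 1 + k) :=
              Nat.findGreatest_is_greatest (n := L.length - 1) (by omega) (by omega)
            have hne : N.cluster (Sum.inl (L.getD (j + 1 + k) p1)) ≠
                N.cluster (Sum.inl p1) := fun hcontra => hnQ ⟨hkL, hcontra⟩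
            rw [List.getD_eq_getElem L p1 hkL, hbL] at hne
            exact fun hcontra => hne hcontra.symm
          · obtain ⟨r', hr', hr'C⟩ := hlast'
            exact ⟨r', by rw [List.getLast?_cons_cons]; exact hr', hr'C⟩
          · have hdecomp : L = L.take (j + 1) ++ L.drop (j + 1) :=
              (List.take_append_drop _ _).symm
            have htake : L.take (j + 1) = p1 :: ps₀.take j := by
              simp [hL]
            rw [hdecomp, htake]
            exact (List.cons_sublist_cons.mpr (List.nil_sublist _)).append hsub

end PetriNet

/-- In a marked proper free-choice net with a home cluster C,
every place marked in some reachable marking is the start of a C-rooted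
disentangled path. -/
theorem rooted_path_from_marked_place {P T : Type} [DecidableEq P]
    (N : PetriNet P T) (M : P → ℕ) (C : Set (P ⊕ T))
    (hp : N.Proper) (hfc : N.FreeChoice) (hc : N.HomeCluster M C)
    (p : P) (hmk : ∃ M', N.Reach M M' ∧ 1 ≤ M' p) :
    ∃ ps ts, N.IsDisPath ps ts ∧ ps.head? = some p ∧
      ∃ r, ps.getLast? = some r ∧ Sum.inl r ∈ C := by
  obtain ⟨M', hMM', hM'p⟩ := hmk
  obtain ⟨σ, hσ⟩ := hc.2 M' hMM'
  obtain ⟨ps, ts, hraw, hhead, hlast⟩ := PetriNet.exists_raw hp C σ M' hσ p hM'p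
  obtain ⟨ps', ts', hdis, hhead', hlast', -⟩ :=
    PetriNet.prune hfc hc.1 ps.length ps ts le_rfl hraw hlast
  exact ⟨ps', ts', hdis, by rw [hhead', hhead], hlast'⟩
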